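/- arXiv:1907.04003 — 2 statements merged into one kernel-verified Lean document; each statement's English description precedes it below -/
import Mathlib

section
/- Recentering the pre-activations does not alter the Lipschitz norm established by spectral normalization: for a nonzero real m×n matrix W and a fixed vector m₀ ∈ ℝᵐ, the mean-spectral-normalized layer map g ↦ (W/σ(W))g − E[(W/σ(W))g]·1 + m₀, where E[h] denotes the mean of the entries of h and 1 is the all-ones vector in ℝᵐ, is 1-Lipschitz with respect to Euclidean norms. -/
/-- The spectral norm of a real `m × n` matrix: the operator norm of the induced
linear map between Euclidean spaces. -/
noncomputable def matSpectralNorm {m n : ℕ} (W : Matrix (Fin m) (Fin n) ℝ) : ℝ :=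
  ‖LinearMap.toContinuousLinearMap (Matrix.toEuclideanLin W)‖

/-- The mean of the entries of a vector in `ℝᵐ`. -/
noncomputable def vecMean {m : ℕ} (h : EuclideanSpace ℝ (Fin m)) : ℝ :=
  (∑ i, h i) / m

lemma sum_mean (mm : ℕ) (h : EuclideanSpace ℝ (Fin mm)) :
    ∑ i, h i = mm * vecMean h := by
  rcases Nat.eq_zero_or_pos mm with hm | hm
  · subst hm; simp
  · have : (mm : ℝ) ≠ 0 := Nat.cast_ne_zero.mpr hm.ne'
    rw [vecMean]; field_simp

/-- The recentering map `h ↦ h - E[h]·1` as a linear map. -/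
noncomputable def recenterLin (mm : ℕ) :
    EuclideanSpace ℝ (Fin mm) →ₗ[ℝ] EuclideanSpace ℝ (Fin mm) where
  toFun h := WithLp.toLp 2 (fun i => h i - vecMean h)
  map_add' a b := by
    ext i
    show (a + b) i - vecMean (a + b) = (a i - vecMean a) + (b i - vecMean b)
    have h1 : (a + b) i = a i + b i := rfl
    have h2 : vecMean (a + b) = vecMean a + vecMean b := by
      simp only [vecMean]
      rw [← add_div, ← Finset.sum_add_distrib]
      rfl
    rw [h1, h2]; ring
  map_smul' c a := by
    ext i
    show (c • a) i - vecMean (c • a) = c * (a i - vecMean a)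
    have h1 : (c • a) i = c * a i := rfl
    have h2 : vecMean (c • a) = c * vecMean a := by
      simp only [vecMean]
      rw [show ∑ x, (c • a) x = ∑ x, c * a x from Finset.sum_congr rfl fun x _ => rfl,
        ← Finset.mul_sum, mul_div_assoc]
    rw [h1, h2]; ring

lemma recenter_norm_le (mm : ℕ) (h : EuclideanSpace ℝ (Fin mm)) :
    ‖recenterLin mm h‖ ≤ 1 * ‖h‖ := by
  rw [one_mul]
  set μ := vecMean h with hμ
  have hsum := sum_mean mm h
  have key : ∑ i, (h i - μ)^2 ≤ ∑ i, (h i)^2 := by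
    have expand : ∑ i, (h i - μ)^2 = ∑ i, ((h i)^2 - 2*μ*(h i) + μ^2) :=
      Finset.sum_congr rfl fun i _ => by ring
    rw [expand, Finset.sum_add_distrib, Finset.sum_sub_distrib, ← Finset.mul_sum,
      Finset.sum_const, Finset.card_univ, Fintype.card_fin, hsum, nsmul_eq_mul]
    nlinarith [sq_nonneg μ, Nat.cast_nonneg (α := ℝ) mm]
  rw [EuclideanSpace.norm_eq, EuclideanSpace.norm_eq]
  apply Real.sqrt_le_sqrt
  have : ∀ i, recenterLin mm h i = h i - μ := fun i => rfl
  simpa [this, Real.norm_eq_abs, sq_abs] using key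

/-- The mean-spectral-normalized (MSN) layer map
`g ↦ (W/σ(W)) g − E[(W/σ(W)) g]·1 + m₀` is `1`-Lipschitz: recentering the
pre-activations does not alter the Lipschitz norm established by spectral
normalization. -/
theorem msn_layer_one_lipschitz {m n : ℕ} (W : Matrix (Fin m) (Fin n) ℝ)
    (hW : W ≠ 0) (m₀ : EuclideanSpace ℝ (Fin m)) :
    LipschitzWith 1 (fun g : EuclideanSpace ℝ (Fin n) =>
      (WithLp.toLp 2 (fun i => Matrix.toEuclideanLin ((matSpectralNorm W)⁻¹ • W) g i
          - vecMean (Matrix.toEuclideanLin ((matSpectralNorm W)⁻¹ • W) g) + m₀ i) :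
        EuclideanSpace ℝ (Fin m))) := by
  set T := LinearMap.toContinuousLinearMap (Matrix.toEuclideanLin W) with hT
  have hT0 : T ≠ 0 := by
    intro h0
    apply hW
    have : Matrix.toEuclideanLin W = 0 := by
      have := congrArg (LinearMap.toContinuousLinearMap (𝕜 := ℝ)).symm h0
      simpa [hT] using this
    simpa using (map_eq_zero_iff _ (Matrix.toEuclideanLin (𝕜 := ℝ)).injective).mp this
  have hσ : 0 < matSpectralNorm W := norm_pos_iff.mpr hT0
  set A := LinearMap.toContinuousLinearMap
      (Matrix.toEuclideanLin ((matSpectralNorm W)⁻¹ • W)) with hA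
  -- A is 1-Lipschitz
  have hAbound : ∀ g, ‖A g‖ ≤ 1 * ‖g‖ := by
    intro g
    have hAg : A g = (matSpectralNorm W)⁻¹ • (T g) := by
      show Matrix.toEuclideanLin ((matSpectralNorm W)⁻¹ • W) g = _
      rw [map_smul]
      rfl
    rw [hAg, one_mul, norm_smul, Real.norm_eq_abs, abs_of_pos (inv_pos.mpr hσ)]
    calc (matSpectralNorm W)⁻¹ * ‖T g‖
        ≤ (matSpectralNorm W)⁻¹ * (‖T‖ * ‖g‖) :=
          mul_le_mul_of_nonneg_left (T.le_opNorm _) (le_of_lt (inv_pos.mpr hσ))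
      _ = ‖g‖ := by
          have hs : matSpectralNorm W = ‖T‖ := rfl
          rw [hs, ← mul_assoc, inv_mul_cancel₀ (by rw [← hs]; exact hσ.ne'), one_mul]
  have lipA : LipschitzWith 1 A := by
    have := AddMonoidHomClass.lipschitz_of_bound A 1 hAbound
    simpa using this
  have lipP : LipschitzWith 1 (recenterLin m) := by
    have := AddMonoidHomClass.lipschitz_of_bound (recenterLin m).toAddMonoidHom 1
      (recenter_norm_le m)
    simpa using this
  have lipC : LipschitzWith 1 (fun h : EuclideanSpace ℝ (Fin m) => h + m₀) :=
    LipschitzWith.of_dist_le_mul fun x y => by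
      rw [dist_add_right x y m₀, NNReal.coe_one, one_mul]
  have total := (lipC.comp (lipP.comp lipA))
  simp only [mul_one, one_mul] at total
  exact total
end

section
/- Let W be a real m×n matrix whose largest singular value σ(W) > 0 is simple, with unit left and right singular vectors u₁, v₁ (W v₁ = σ(W) u₁, Wᵀ u₁ = σ(W) v₁). Then the spectral normalization map N(W) = W/σ(W) is differentiable at W, and its derivative in the direction of a matrix H is (1/σ(W))·(H − (u₁ᵀ H v₁)·Ŵ), where Ŵ = W/σ(W); in particular, taking H = I_{ij} (the matrix with 1 in entry (i,j) and 0 elsewhere), ∂Ŵ/∂W_{ij} = (1/σ(W))·(I_{ij} − [u₁ v₁ᵀ]_{ij}·Ŵ). -/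
open scoped Matrix

attribute [local instance] Matrix.frobeniusNormedAddCommGroup Matrix.frobeniusNormedSpace

/-- The continuous linear functional `H ↦ u₁ᵀ H v₁ = u₁ ⬝ᵥ (H v₁)` on matrices. -/
noncomputable def singularPairing {m n : ℕ} (u : Fin m → ℝ) (v : Fin n → ℝ) :
    Matrix (Fin m) (Fin n) ℝ →L[ℝ] ℝ :=
  LinearMap.toContinuousLinearMap
    { toFun := fun H : Matrix (Fin m) (Fin n) ℝ => u ⬝ᵥ H.mulVec v
      map_add' := fun A B => by simp [Matrix.add_mulVec, dotProduct_add]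
      map_smul' := fun c A => by simp [Matrix.smul_mulVec, dotProduct_smul] }

/-- The continuous linear map `H ↦ (1/σ(W)) (H − (u₁ᵀ H v₁) Ŵ)`,
where `Ŵ = W/σ(W)`. -/
noncomputable def snDeriv {m n : ℕ} (W : Matrix (Fin m) (Fin n) ℝ)
    (u : Fin m → ℝ) (v : Fin n → ℝ) :
    Matrix (Fin m) (Fin n) ℝ →L[ℝ] Matrix (Fin m) (Fin n) ℝ :=
  (matSpectralNorm W)⁻¹ •
    (ContinuousLinearMap.id ℝ (Matrix (Fin m) (Fin n) ℝ) -
      (singularPairing u v).smulRight ((matSpectralNorm W)⁻¹ • W))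

set_option maxHeartbeats 1000000


variable {m n : ℕ}

noncomputable def BB (M : Matrix (Fin m) (Fin n) ℝ) :
    EuclideanSpace ℝ (Fin n) →L[ℝ] EuclideanSpace ℝ (Fin m) :=
  LinearMap.toContinuousLinearMap (Matrix.toEuclideanLin M)

lemma BB_apply (M : Matrix (Fin m) (Fin n) ℝ) (v : EuclideanSpace ℝ (Fin n)) :
    (BB M v : Fin m → ℝ) = M.mulVec v := rfl

lemma sn_eq (M : Matrix (Fin m) (Fin n) ℝ) : matSpectralNorm M = ‖BB M‖ := rfl

lemma BB_le (M : Matrix (Fin m) (Fin n) ℝ) (v : EuclideanSpace ℝ (Fin n)) :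
    ‖BB M v‖ ≤ matSpectralNorm M * ‖v‖ := (BB M).le_opNorm v

lemma BB_add (M N : Matrix (Fin m) (Fin n) ℝ) : BB (M + N) = BB M + BB N := by
  simp [BB, map_add]

lemma inner_eq_dot (x y : EuclideanSpace ℝ (Fin n)) :
    (inner ℝ x y : ℝ) = (x : Fin n → ℝ) ⬝ᵥ (y : Fin n → ℝ) := by
  simp [PiLp.inner_apply, dotProduct, mul_comm]

lemma inner_BB (M : Matrix (Fin m) (Fin n) ℝ) (x : EuclideanSpace ℝ (Fin n))
    (y : EuclideanSpace ℝ (Fin m)) :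
    (inner ℝ (BB M x) y : ℝ) = inner ℝ x (BB M.transpose y) := by
  simp only [inner_eq_dot, BB_apply]
  rw [dotProduct_comm, Matrix.dotProduct_mulVec, Matrix.mulVec_transpose,
    dotProduct_comm]

lemma exists_C : ∃ C : ℝ, 0 ≤ C ∧ ∀ M : Matrix (Fin m) (Fin n) ℝ, matSpectralNorm M ≤ C * ‖M‖ := by
  have hlin : IsLinearMap ℝ (fun M : Matrix (Fin m) (Fin n) ℝ => BB M) := by
    constructor
    · exact BB_add
    · intro c M; simp [BB, map_smul]
  letI : TopologicalSpace (Matrix (Fin m) (Fin n) ℝ) :=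
    PseudoMetricSpace.toUniformSpace.toTopologicalSpace
  let Φ : Matrix (Fin m) (Fin n) ℝ →L[ℝ] (EuclideanSpace ℝ (Fin n) →L[ℝ] EuclideanSpace ℝ (Fin m)) :=
    LinearMap.toContinuousLinearMap hlin.mk'
  refine ⟨‖Φ‖, norm_nonneg Φ, fun M => ?_⟩
  simpa [sn_eq, Φ, hlin] using Φ.le_opNorm M

lemma pairing_le (u : EuclideanSpace ℝ (Fin m)) (v : EuclideanSpace ℝ (Fin n))
    (hu : ‖u‖ = 1) (hv : ‖v‖ = 1) (H : Matrix (Fin m) (Fin n) ℝ) :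
    |(u : Fin m → ℝ) ⬝ᵥ H.mulVec v| ≤ matSpectralNorm H := by
  have h1 : (u : Fin m → ℝ) ⬝ᵥ H.mulVec v = (inner ℝ u (BB H v) : ℝ) := by
    rw [inner_eq_dot, BB_apply]
  rw [h1]
  calc |(inner ℝ u (BB H v) : ℝ)| ≤ ‖u‖ * ‖BB H v‖ := abs_real_inner_le_norm u _
    _ ≤ 1 * (matSpectralNorm H * ‖v‖) := by rw [hu]; exact mul_le_mul_of_nonneg_left (BB_le H v) zero_le_one
    _ = matSpectralNorm H := by rw [hv]; ring

lemma gap (W : Matrix (Fin m) (Fin n) ℝ) (u₁ : EuclideanSpace ℝ (Fin m))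
    (v₁ : EuclideanSpace ℝ (Fin n)) (hσpos : 0 < matSpectralNorm W) (hu : ‖u₁‖ = 1)
    (hv : ‖v₁‖ = 1)
    (hWv : W.mulVec v₁ = matSpectralNorm W • (u₁ : Fin m → ℝ))
    (hWu : W.transpose.mulVec u₁ = matSpectralNorm W • (v₁ : Fin n → ℝ))
    (hsimple : ∀ v : Fin n → ℝ,
      (W.transpose * W).mulVec v = (matSpectralNorm W ^ 2) • v →
      ∃ c : ℝ, v = c • (v₁ : Fin n → ℝ)) :
    ∃ μ : ℝ, 0 ≤ μ ∧ μ < (matSpectralNorm W)^2 ∧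
      ∀ w : EuclideanSpace ℝ (Fin n), (inner ℝ v₁ w : ℝ) = 0 →
        ‖BB W w‖^2 ≤ μ * ‖w‖^2 := by
  set σ := matSpectralNorm W with hσ
  by_cases hK : ∀ w : EuclideanSpace ℝ (Fin n), (inner ℝ v₁ w : ℝ) = 0 → w = 0
  · refine ⟨σ^2/2, by positivity, by nlinarith, fun w hw => ?_⟩
    rw [hK w hw]
    simp
  · push_neg at hK
    obtain ⟨w', hw'perp, hw'ne⟩ := hK
    set T : EuclideanSpace ℝ (Fin n) →L[ℝ] EuclideanSpace ℝ (Fin n) :=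
      (BB W.transpose).comp (BB W) with hT
    have hTsym : IsSelfAdjoint T := by
      rw [ContinuousLinearMap.isSelfAdjoint_iff_isSymmetric]
      intro x y
      show (inner ℝ (BB W.transpose (BB W x)) y : ℝ) = inner ℝ x (BB W.transpose (BB W y))
      rw [inner_BB, Matrix.transpose_transpose, inner_BB W x (BB W y)]
    have hTinner : ∀ x : EuclideanSpace ℝ (Fin n), (inner ℝ (T x) x : ℝ) = ‖BB W x‖^2 := by
      intro x
      show (inner ℝ (BB W.transpose (BB W x)) x : ℝ) = _
      rw [inner_BB, Matrix.transpose_transpose, real_inner_self_eq_norm_sq]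
    -- compact set
    set S : Set (EuclideanSpace ℝ (Fin n)) :=
      Metric.sphere 0 1 ∩ {w | (inner ℝ v₁ w : ℝ) = 0} with hS
    have hScompact : IsCompact S :=
      (isCompact_sphere 0 1).inter_right
        (isClosed_eq (continuous_const.inner continuous_id) continuous_const)
    have hSne : S.Nonempty := by
      refine ⟨‖w'‖⁻¹ • w', ?_, ?_⟩
      · simp [norm_smul, inv_mul_cancel₀ (norm_ne_zero_iff.2 hw'ne)]
      · show (inner ℝ v₁ (‖w'‖⁻¹ • w') : ℝ) = 0
        rw [real_inner_smul_right, hw'perp, mul_zero]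
    obtain ⟨w₀, hw₀S, hmax⟩ := hScompact.exists_isMaxOn hSne
      (Continuous.continuousOn (by continuity : Continuous fun w => ‖BB W w‖^2))
    have hw₀sphere : ‖w₀‖ = 1 := by simpa using hw₀S.1
    have hw₀perp : (inner ℝ v₁ w₀ : ℝ) = 0 := hw₀S.2
    set μ := ‖BB W w₀‖^2 with hμ
    have hbound : ∀ w : EuclideanSpace ℝ (Fin n), (inner ℝ v₁ w : ℝ) = 0 →
        ‖BB W w‖^2 ≤ μ * ‖w‖^2 := by
      intro w hw
      rcases eq_or_ne w 0 with rfl | hne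
      · simp
      · have hnw : (0:ℝ) < ‖w‖ := norm_pos_iff.2 hne
        have hmem : ‖w‖⁻¹ • w ∈ S := by
          constructor
          · simp [norm_smul, inv_mul_cancel₀ hnw.ne']
          · show (inner ℝ v₁ (‖w‖⁻¹ • w) : ℝ) = 0
            rw [real_inner_smul_right, hw, mul_zero]
        have := hmax hmem
        simp only [Set.mem_setOf_eq, map_smul, norm_smul, mul_pow, norm_inv, norm_norm] at this
        have h2 : ‖w‖⁻¹ ^ 2 * ‖BB W w‖ ^ 2 ≤ μ := this
        calc ‖BB W w‖^2 = (‖w‖⁻¹^2 * ‖BB W w‖^2) * ‖w‖^2 := by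
              field_simp
          _ ≤ μ * ‖w‖^2 := by nlinarith
    have hμle : μ ≤ σ^2 := by
      have := BB_le W w₀
      rw [hw₀sphere, mul_one] at this
      nlinarith [norm_nonneg (BB W w₀)]
    refine ⟨μ, by positivity, lt_of_le_of_ne hμle ?_, hbound⟩
    -- suppose μ = σ^2; derive contradiction
    intro hμeq
    have hmax' : IsMaxOn T.reApplyInnerSelf (Metric.sphere (0:EuclideanSpace ℝ (Fin n)) ‖w₀‖) w₀ := by
      intro x hx
      have hx1 : ‖x‖ = 1 := by rw [hw₀sphere] at hx; simpa using hx
      show T.reApplyInnerSelf x ≤ T.reApplyInnerSelf w₀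
      have h1 : T.reApplyInnerSelf x = ‖BB W x‖^2 := by
        simp [ContinuousLinearMap.reApplyInnerSelf, hTinner x, real_inner_comm]
      have h2 : T.reApplyInnerSelf w₀ = μ := by
        simp [ContinuousLinearMap.reApplyInnerSelf, hTinner w₀, real_inner_comm, hμ]
      rw [h1, h2, hμeq]
      have := BB_le W x
      rw [hx1, mul_one] at this
      nlinarith [norm_nonneg (BB W x)]
    have hw₀ne : w₀ ≠ 0 := by
      intro h; rw [h] at hw₀sphere; simp at hw₀sphere
    have heig := hTsym.eq_smul_self_of_isLocalExtrOn (Or.inr hmax'.localize)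
    have hray : T.rayleighQuotient w₀ = σ^2 := by
      simp only [ContinuousLinearMap.rayleighQuotient, ContinuousLinearMap.reApplyInnerSelf,
        hw₀sphere]
      rw [show ((inner ℝ (T w₀) w₀ : ℝ)) = μ by rw [hTinner]]
      simp [hμeq]
    rw [hray] at heig
    -- translate to matrix equation
    have hmat : (W.transpose * W).mulVec (w₀ : Fin n → ℝ) = (σ^2) • (w₀ : Fin n → ℝ) := by
      have : (T w₀ : Fin n → ℝ) = (W.transpose * W).mulVec w₀ := by
        show W.transpose.mulVec (W.mulVec w₀) = _
        rw [Matrix.mulVec_mulVec]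
      rw [← this, heig]
      rfl
    obtain ⟨c, hc⟩ := hsimple w₀ hmat
    have : (inner ℝ v₁ w₀ : ℝ) = c := by
      have hw₀eq : w₀ = c • v₁ := by ext i; exact congrFun hc i
      rw [hw₀eq, real_inner_smul_right, real_inner_self_eq_norm_sq, hv]
      ring
    rw [hw₀perp] at this
    have : w₀ = 0 := by
      have hw₀eq : w₀ = c • v₁ := by ext i; exact congrFun hc i
      rw [hw₀eq, ← this]; simp
    exact hw₀ne this

lemma singularPairing_apply (u : Fin m → ℝ) (v : Fin n → ℝ) (H : Matrix (Fin m) (Fin n) ℝ) :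
    singularPairing u v H = u ⬝ᵥ H.mulVec v := rfl

section estimates
variable (W H : Matrix (Fin m) (Fin n) ℝ) (u₁ : EuclideanSpace ℝ (Fin m))
  (v₁ : EuclideanSpace ℝ (Fin n))

lemma quad_bound (σ s t ε : ℝ) (hε : 0 < ε) (_hσ : 0 ≤ σ) (_hs : 0 ≤ s) (_ht : 0 ≤ t) :
    6 * σ * s * t - ε * t^2 ≤ 9 * σ^2 / ε * s^2 := by
  rw [div_mul_eq_mul_div, le_div_iff₀ hε]
  nlinarith [sq_nonneg (ε * t - 3 * σ * s)]

lemma key_sq (hσpos : 0 < matSpectralNorm W) (hu : ‖u₁‖ = 1) (hv : ‖v₁‖ = 1)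
    (hWv : W.mulVec v₁ = matSpectralNorm W • (u₁ : Fin m → ℝ))
    (hWu : W.transpose.mulVec u₁ = matSpectralNorm W • (v₁ : Fin n → ℝ))
    (μ : ℝ) (hμ0 : 0 ≤ μ) (hμlt : μ < (matSpectralNorm W)^2)
    (hμ : ∀ w : EuclideanSpace ℝ (Fin n), (inner ℝ v₁ w : ℝ) = 0 →
        ‖BB W w‖^2 ≤ μ * ‖w‖^2)
    (v : EuclideanSpace ℝ (Fin n)) (hv1 : ‖v‖ = 1) :
    ‖BB (W + H) v‖^2 ≤ (matSpectralNorm W)^2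
        + 2 * matSpectralNorm W * ((u₁ : Fin m → ℝ) ⬝ᵥ H.mulVec v₁)
        + (1 + 9 * (matSpectralNorm W)^2 / ((matSpectralNorm W)^2 - μ)) * (matSpectralNorm H)^2 := by
  set σ := matSpectralNorm W with hσdef
  set s := matSpectralNorm H with hsdef
  have hs0 : 0 ≤ s := norm_nonneg _
  set ε := σ^2 - μ with hεdef
  have hε : 0 < ε := by simp only [hεdef]; linarith
  set L := (u₁ : Fin m → ℝ) ⬝ᵥ H.mulVec v₁ with hLdef
  have hLabs : |L| ≤ s := pairing_le u₁ v₁ hu hv H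
  obtain ⟨hLlo, hLhi⟩ := abs_le.mp hLabs
  set a : ℝ := inner ℝ v₁ v with hadef
  set w : EuclideanSpace ℝ (Fin n) := v - a • v₁ with hwdef
  have hwperp : (inner ℝ v₁ w : ℝ) = 0 := by
    rw [hwdef, inner_sub_right, real_inner_smul_right, real_inner_self_eq_norm_sq, hv]
    simp [hadef]
  have hvdecomp : v = a • v₁ + w := by rw [hwdef]; abel
  set t := ‖w‖ with htdef
  have ht0 : 0 ≤ t := norm_nonneg _
  have hnormsum : a^2 + t^2 = 1 := by
    have h1 : ‖v‖^2 = ‖a • v₁‖^2 + 2 * (inner ℝ (a • v₁) w : ℝ) + ‖w‖^2 := by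
      conv_lhs => rw [hvdecomp]
      exact norm_add_sq_real _ _
    rw [hv1, norm_smul, hv, real_inner_smul_left, hwperp, Real.norm_eq_abs] at h1
    simp only [mul_one, mul_zero] at h1
    nlinarith [sq_abs a]
  have ht1 : t ≤ 1 := by nlinarith [sq_nonneg a]
  have ha1 : |a| ≤ 1 := by nlinarith [sq_abs a, abs_nonneg a, sq_nonneg t]
  have hBv₁ : BB W v₁ = σ • u₁ := by ext i; exact congrFun hWv i
  have hBu₁ : BB W.transpose u₁ = σ • v₁ := by ext i; exact congrFun hWu i
  -- perpendicularity of images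
  have hWw_perp : (inner ℝ u₁ (BB W w) : ℝ) = 0 := by
    rw [real_inner_comm, inner_BB, hBu₁, real_inner_smul_right, real_inner_comm, hwperp,
      mul_zero]
  have hBWv : BB W v = (a * σ) • u₁ + BB W w := by
    conv_lhs => rw [hvdecomp]
    rw [map_add, map_smul, hBv₁, smul_smul]
  have hbw : ‖BB W w‖ ≤ σ * t := by simpa using BB_le W w
  have hbw2 : ‖BB W w‖^2 ≤ μ * t^2 := hμ w hwperp
  have hBW2 : ‖BB W v‖^2 ≤ σ^2 - ε * t^2 := by
    have h1 : ‖BB W v‖^2 = ‖(a * σ) • u₁‖^2 + 2 * (inner ℝ ((a * σ) • u₁) (BB W w) : ℝ)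
        + ‖BB W w‖^2 := by rw [hBWv]; exact norm_add_sq_real _ _
    rw [real_inner_smul_left, hWw_perp, norm_smul, hu, Real.norm_eq_abs] at h1
    simp only [mul_zero, mul_one] at h1
    nlinarith [sq_abs (a * σ)]
  -- H-part bounds
  have hbh : ‖BB H v‖ ≤ s := by simpa [hv1] using BB_le H v
  have hLinner : (inner ℝ u₁ (BB H v₁) : ℝ) = L := by rw [inner_eq_dot]; rfl
  set r₁ : ℝ := inner ℝ u₁ (BB H w) with hr₁def
  have hr₁abs : |r₁| ≤ s * t := by
    calc |r₁| ≤ ‖u₁‖ * ‖BB H w‖ := abs_real_inner_le_norm _ _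
      _ ≤ 1 * (s * t) := by rw [hu]; exact mul_le_mul_of_nonneg_left (BB_le H w) zero_le_one
      _ = s * t := one_mul _
  have hBHv_split : (inner ℝ u₁ (BB H v) : ℝ) = a * L + r₁ := by
    conv_lhs => rw [hvdecomp]
    rw [map_add, map_smul, inner_add_right, real_inner_smul_right, hLinner, hr₁def]
  set q : ℝ := inner ℝ (BB W v) (BB H v) with hqdef
  set q₂ : ℝ := inner ℝ (BB W w) (BB H v) with hq₂def
  have hq₂abs : |q₂| ≤ σ * t * s := by
    calc |q₂| ≤ ‖BB W w‖ * ‖BB H v‖ := abs_real_inner_le_norm _ _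
      _ ≤ (σ * t) * s := mul_le_mul hbw hbh (norm_nonneg _) (by positivity)
      _ = σ * t * s := by ring
  have hqsplit : q = (a * σ) * (a * L + r₁) + q₂ := by
    rw [hqdef, hBWv, inner_add_left, real_inner_smul_left, hBHv_split, hq₂def]
  have hq : q ≤ σ * L + 3 * σ * s * t := by
    have c1 : a^2 * σ * L ≤ σ * L + σ * s * t := by
      have h1 : t^2 * L ≥ -(t^2 * s) := by nlinarith [sq_nonneg t]
      have h2 : s * t * (1 - t) ≥ 0 := by
        apply mul_nonneg (mul_nonneg hs0 ht0); linarith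
      have ha2 : a^2 = 1 - t^2 := by linarith
      rw [ha2]
      nlinarith
    have c2 : a * σ * r₁ ≤ σ * s * t := by
      have h1 : a * r₁ ≤ s * t := by
        calc a * r₁ ≤ |a * r₁| := le_abs_self _
          _ = |a| * |r₁| := abs_mul _ _
          _ ≤ 1 * (s * t) := mul_le_mul ha1 hr₁abs (abs_nonneg _) zero_le_one
          _ = s * t := one_mul _
      calc a * σ * r₁ = σ * (a * r₁) := by ring
        _ ≤ σ * (s * t) := mul_le_mul_of_nonneg_left h1 hσpos.le
        _ = σ * s * t := by ring
    have c3 : q₂ ≤ σ * t * s := le_trans (le_abs_self _) hq₂abs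
    have : q = a^2 * σ * L + a * σ * r₁ + q₂ := by rw [hqsplit]; ring
    rw [this]
    linarith
  -- total
  have hsplit : ‖BB (W + H) v‖^2 = ‖BB W v‖^2 + 2 * q + ‖BB H v‖^2 := by
    rw [BB_add, ContinuousLinearMap.add_apply]
    exact norm_add_sq_real _ _
  have hbh2 : ‖BB H v‖^2 ≤ s^2 := by nlinarith [norm_nonneg (BB H v)]
  have hquad : 6 * σ * s * t - ε * t^2 ≤ 9 * σ^2 / ε * s^2 :=
    quad_bound σ s t ε hε (by positivity) hs0 ht0
  calc ‖BB (W + H) v‖^2 = ‖BB W v‖^2 + 2 * q + ‖BB H v‖^2 := hsplit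
    _ ≤ (σ^2 - ε * t^2) + 2 * (σ * L + 3 * σ * s * t) + s^2 := by linarith
    _ = σ^2 + 2 * σ * L + s^2 + (6 * σ * s * t - ε * t^2) := by ring
    _ ≤ σ^2 + 2 * σ * L + s^2 + 9 * σ^2 / ε * s^2 := by linarith
    _ = σ^2 + 2 * σ * L + (1 + 9 * σ^2 / ε) * s^2 := by ring
end estimates

lemma sq_le_of_nonneg {x b : ℝ} (hx : 0 ≤ x) (hb : 0 ≤ b) (h : x^2 ≤ b^2) : x ≤ b := by
  nlinarith

section upperlower
variable (W : Matrix (Fin m) (Fin n) ℝ) (u₁ : EuclideanSpace ℝ (Fin m))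
  (v₁ : EuclideanSpace ℝ (Fin n))

lemma sn_lower (hσpos : 0 < matSpectralNorm W) (hu : ‖u₁‖ = 1) (hv : ‖v₁‖ = 1)
    (hWv : W.mulVec v₁ = matSpectralNorm W • (u₁ : Fin m → ℝ))
    (H : Matrix (Fin m) (Fin n) ℝ) :
    matSpectralNorm W + (u₁ : Fin m → ℝ) ⬝ᵥ H.mulVec v₁ ≤ matSpectralNorm (W + H) := by
  have hBv₁ : BB W v₁ = matSpectralNorm W • u₁ := by ext i; exact congrFun hWv i
  have h1 : (inner ℝ u₁ (BB (W + H) v₁) : ℝ)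
      = matSpectralNorm W + (u₁ : Fin m → ℝ) ⬝ᵥ H.mulVec v₁ := by
    rw [BB_add, ContinuousLinearMap.add_apply, inner_add_right, hBv₁, real_inner_smul_right,
      real_inner_self_eq_norm_sq, hu]
    rw [show (inner ℝ u₁ (BB H v₁) : ℝ) = (u₁ : Fin m → ℝ) ⬝ᵥ H.mulVec v₁ by
      rw [inner_eq_dot]; rfl]
    ring
  rw [← h1]
  calc (inner ℝ u₁ (BB (W + H) v₁) : ℝ) ≤ ‖u₁‖ * ‖BB (W + H) v₁‖ := real_inner_le_norm _ _
    _ = ‖BB (W + H) v₁‖ := by rw [hu, one_mul]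
    _ ≤ matSpectralNorm (W + H) * ‖v₁‖ := BB_le _ _
    _ = matSpectralNorm (W + H) := by rw [hv, mul_one]

lemma sn_upper (hσpos : 0 < matSpectralNorm W) (hu : ‖u₁‖ = 1) (hv : ‖v₁‖ = 1)
    (hWv : W.mulVec v₁ = matSpectralNorm W • (u₁ : Fin m → ℝ))
    (hWu : W.transpose.mulVec u₁ = matSpectralNorm W • (v₁ : Fin n → ℝ))
    (μ : ℝ) (hμ0 : 0 ≤ μ) (hμlt : μ < (matSpectralNorm W)^2)
    (hμ : ∀ w : EuclideanSpace ℝ (Fin n), (inner ℝ v₁ w : ℝ) = 0 →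
        ‖BB W w‖^2 ≤ μ * ‖w‖^2)
    (H : Matrix (Fin m) (Fin n) ℝ) (hsmall : matSpectralNorm H ≤ matSpectralNorm W) :
    matSpectralNorm (W + H) ≤ matSpectralNorm W + (u₁ : Fin m → ℝ) ⬝ᵥ H.mulVec v₁
      + ((1 + 9 * (matSpectralNorm W)^2 / ((matSpectralNorm W)^2 - μ)) / (2 * matSpectralNorm W))
        * (matSpectralNorm H)^2 := by
  set σ := matSpectralNorm W with hσdef
  set s := matSpectralNorm H with hsdef
  set L := (u₁ : Fin m → ℝ) ⬝ᵥ H.mulVec v₁ with hLdef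
  set C₃ := 1 + 9 * σ^2 / (σ^2 - μ) with hC₃def
  set C₄ := C₃ / (2 * σ) with hC₄def
  have hs0 : 0 ≤ s := norm_nonneg _
  have hC₃0 : 0 ≤ C₃ := by
    have : 0 < σ^2 - μ := by nlinarith
    positivity
  have hC₄0 : 0 ≤ C₄ := by positivity
  have hLabs : |L| ≤ s := pairing_le u₁ v₁ hu hv H
  set b := σ + L + C₄ * s^2 with hbdef
  have hb0 : 0 ≤ b := by
    have := abs_le.mp hLabs
    have : -σ ≤ L := by linarith
    nlinarith
  have h2σC₄ : 2 * σ * C₄ = C₃ := by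
    rw [hC₄def]; field_simp
  have hb2 : σ^2 + 2 * σ * L + C₃ * s^2 ≤ b^2 := by
    have hLC : 0 ≤ (L + C₄ * s^2)^2 := sq_nonneg _
    nlinarith [hLC, h2σC₄]
  show matSpectralNorm (W + H) ≤ b
  rw [sn_eq]
  apply ContinuousLinearMap.opNorm_le_bound _ hb0
  intro x
  rcases eq_or_ne x 0 with rfl | hx
  · simp
  · have hnx : (0:ℝ) < ‖x‖ := norm_pos_iff.2 hx
    set x' : EuclideanSpace ℝ (Fin n) := ‖x‖⁻¹ • x with hx'def
    have hx'1 : ‖x'‖ = 1 := by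
      rw [hx'def, norm_smul, norm_inv, norm_norm, inv_mul_cancel₀ hnx.ne']
    have hkey := key_sq W H u₁ v₁ hσpos hu hv hWv hWu μ hμ0 hμlt hμ x' hx'1
    have hsq : ‖BB (W + H) x'‖^2 ≤ b^2 := le_trans hkey hb2
    have h1 : ‖BB (W + H) x'‖ ≤ b := sq_le_of_nonneg (norm_nonneg _) hb0 hsq
    have h2 : ‖BB (W + H) x‖ = ‖x‖ * ‖BB (W + H) x'‖ := by
      rw [hx'def, map_smul, norm_smul, norm_inv, norm_norm]
      field_simp
    rw [h2]
    calc ‖x‖ * ‖BB (W + H) x'‖ ≤ ‖x‖ * b := by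
          exact mul_le_mul_of_nonneg_left h1 hnx.le
      _ = b * ‖x‖ := mul_comm _ _

end upperlower

lemma sn_hasFDerivAt (W : Matrix (Fin m) (Fin n) ℝ) (u₁ : EuclideanSpace ℝ (Fin m))
    (v₁ : EuclideanSpace ℝ (Fin n))
    (hσpos : 0 < matSpectralNorm W) (hu : ‖u₁‖ = 1) (hv : ‖v₁‖ = 1)
    (hWv : W.mulVec v₁ = matSpectralNorm W • (u₁ : Fin m → ℝ))
    (hWu : W.transpose.mulVec u₁ = matSpectralNorm W • (v₁ : Fin n → ℝ))
    (hsimple : ∀ v : Fin n → ℝ,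
      (W.transpose * W).mulVec v = (matSpectralNorm W ^ 2) • v →
      ∃ c : ℝ, v = c • (v₁ : Fin n → ℝ)) :
    HasFDerivAt matSpectralNorm (singularPairing (u₁ : Fin m → ℝ) (v₁ : Fin n → ℝ)) W := by
  obtain ⟨μ, hμ0, hμlt, hμ⟩ := gap W u₁ v₁ hσpos hu hv hWv hWu hsimple
  obtain ⟨C, hC0, hC⟩ := exists_C (m := m) (n := n)
  set σ := matSpectralNorm W with hσdef
  set C₄ := (1 + 9 * σ^2 / (σ^2 - μ)) / (2 * σ) with hC₄def
  have hC₄0 : 0 ≤ C₄ := by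
    have : 0 < σ^2 - μ := by nlinarith
    have : (0:ℝ) ≤ 1 + 9 * σ^2 / (σ^2 - μ) := by positivity
    positivity
  refine (hasFDerivAt_iff_isLittleO_nhds_zero).2 ?_
  rw [Asymptotics.isLittleO_iff]
  intro c hc
  set K := C₄ * C^2 with hKdef
  have hK0 : 0 ≤ K := by positivity
  set δ := min (σ / (C + 1)) (c / (K + 1)) with hδdef
  have hδpos : 0 < δ := by
    apply lt_min
    · positivity
    · positivity
  filter_upwards [Metric.ball_mem_nhds (0 : Matrix (Fin m) (Fin n) ℝ) hδpos] with H hH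
  have hHnorm : ‖H‖ < δ := by simpa using mem_ball_zero_iff.mp hH
  have hsH : matSpectralNorm H ≤ C * ‖H‖ := hC H
  have hsmall : matSpectralNorm H ≤ σ := by
    have h1 : ‖H‖ ≤ σ / (C + 1) := le_of_lt (lt_of_lt_of_le hHnorm (min_le_left _ _))
    have h2 : C * ‖H‖ ≤ C * (σ / (C + 1)) := mul_le_mul_of_nonneg_left h1 hC0
    have h3 : C * (σ / (C + 1)) ≤ σ := by
      rw [mul_div_assoc']
      rw [div_le_iff₀ (by linarith : (0:ℝ) < C + 1)]
      nlinarith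
    linarith
  set L := (u₁ : Fin m → ℝ) ⬝ᵥ H.mulVec v₁ with hLdef
  have hup := sn_upper W u₁ v₁ hσpos hu hv hWv hWu μ hμ0 hμlt hμ H hsmall
  have hlo := sn_lower W u₁ v₁ hσpos hu hv hWv H
  have hLpair : singularPairing (u₁ : Fin m → ℝ) (v₁ : Fin n → ℝ) H = L := rfl
  have habs : |matSpectralNorm (W + H) - σ - L| ≤ C₄ * (matSpectralNorm H)^2 := by
    rw [abs_le]
    constructor
    · nlinarith [sq_nonneg (matSpectralNorm H)]
    · linarith
  have hfin : C₄ * (matSpectralNorm H)^2 ≤ c * ‖H‖ := by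
    calc C₄ * (matSpectralNorm H)^2 ≤ C₄ * (C * ‖H‖)^2 := by
          apply mul_le_mul_of_nonneg_left _ hC₄0
          exact pow_le_pow_left₀ (norm_nonneg _) hsH 2
      _ = K * ‖H‖ * ‖H‖ := by rw [hKdef]; ring
      _ ≤ c * ‖H‖ := by
          apply mul_le_mul_of_nonneg_right _ (norm_nonneg _)
          have h1 : ‖H‖ ≤ c / (K + 1) := le_of_lt (lt_of_lt_of_le hHnorm (min_le_right _ _))
          have h2 : K * ‖H‖ ≤ K * (c / (K + 1)) := mul_le_mul_of_nonneg_left h1 hK0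
          have h3 : K * (c / (K + 1)) ≤ c := by
            rw [mul_div_assoc']
            rw [div_le_iff₀ (by linarith : (0:ℝ) < K + 1)]
            nlinarith
          linarith
  rw [Real.norm_eq_abs]
  exact le_trans habs hfin

lemma pairing_stdBasis (u : Fin m → ℝ) (v : Fin n → ℝ) (i : Fin m) (j : Fin n) :
    singularPairing u v (Matrix.single i j 1) = u i * v j := by
  rw [singularPairing_apply]
  simp [Matrix.mulVec, dotProduct, Matrix.single, ite_and, mul_ite,
    Finset.mul_sum]

theorem spectral_normalization_hasFDerivAt' (W : Matrix (Fin m) (Fin n) ℝ)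
    (u₁ : EuclideanSpace ℝ (Fin m)) (v₁ : EuclideanSpace ℝ (Fin n))
    (hσpos : 0 < matSpectralNorm W) (hu : ‖u₁‖ = 1) (hv : ‖v₁‖ = 1)
    (hWv : W.mulVec v₁ = matSpectralNorm W • (u₁ : Fin m → ℝ))
    (hWu : W.transpose.mulVec u₁ = matSpectralNorm W • (v₁ : Fin n → ℝ))
    (hsimple : ∀ v : Fin n → ℝ,
      (W.transpose * W).mulVec v = (matSpectralNorm W ^ 2) • v →
      ∃ c : ℝ, v = c • (v₁ : Fin n → ℝ)) :
    HasFDerivAt (fun M : Matrix (Fin m) (Fin n) ℝ => (matSpectralNorm M)⁻¹ • M)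
      (snDeriv W u₁ v₁) W ∧
    ∀ i : Fin m, ∀ j : Fin n,
      snDeriv W u₁ v₁ (Matrix.single i j 1) =
        (matSpectralNorm W)⁻¹ •
          (Matrix.single i j 1 - (u₁ i * v₁ j) • ((matSpectralNorm W)⁻¹ • W)) := by
  constructor
  · have hg := sn_hasFDerivAt W u₁ v₁ hσpos hu hv hWv hWu hsimple
    have hginv := (hasFDerivAt_inv' (𝕜 := ℝ) (ne_of_gt hσpos)).comp W hg
    have hprod := hginv.smul (hasFDerivAt_id W)
    refine hprod.congr_fderiv ?_
    ext H i j
    change (matSpectralNorm W)⁻¹ * H i j + (-((matSpectralNorm W)⁻¹ *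
        singularPairing (u₁ : Fin m → ℝ) (v₁ : Fin n → ℝ) H * (matSpectralNorm W)⁻¹)) * W i j =
      (matSpectralNorm W)⁻¹ * (H i j - singularPairing (u₁ : Fin m → ℝ) (v₁ : Fin n → ℝ) H *
        ((matSpectralNorm W)⁻¹ * W i j))
    ring
  · intro i j
    simp only [snDeriv, ContinuousLinearMap.smul_apply, ContinuousLinearMap.sub_apply,
      ContinuousLinearMap.id_apply, ContinuousLinearMap.smulRight_apply]
    rw [pairing_stdBasis]

/-- If the largest singular value `σ(W) > 0` of `W` is simple, then the spectral
normalization map `N(W) = W/σ(W)` is differentiable at `W`. -/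
theorem spectral_normalization_hasFDerivAt {m n : ℕ} (W : Matrix (Fin m) (Fin n) ℝ)
    (u₁ : EuclideanSpace ℝ (Fin m)) (v₁ : EuclideanSpace ℝ (Fin n))
    (hσpos : 0 < matSpectralNorm W) (hu : ‖u₁‖ = 1) (hv : ‖v₁‖ = 1)
    (hWv : W.mulVec v₁ = matSpectralNorm W • (u₁ : Fin m → ℝ))
    (hWu : W.transpose.mulVec u₁ = matSpectralNorm W • (v₁ : Fin n → ℝ))
    (hsimple : ∀ v : Fin n → ℝ,
      (W.transpose * W).mulVec v = (matSpectralNorm W ^ 2) • v →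
      ∃ c : ℝ, v = c • (v₁ : Fin n → ℝ)) :
    HasFDerivAt (fun M : Matrix (Fin m) (Fin n) ℝ => (matSpectralNorm M)⁻¹ • M)
      (snDeriv W u₁ v₁) W ∧
    ∀ i : Fin m, ∀ j : Fin n,
      snDeriv W u₁ v₁ (Matrix.single i j 1) =
        (matSpectralNorm W)⁻¹ •
          (Matrix.single i j 1 - (u₁ i * v₁ j) • ((matSpectralNorm W)⁻¹ • W)) :=
  spectral_normalization_hasFDerivAt' W u₁ v₁ hσpos hu hv hWv hWu hsimple
end
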